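/- Let K be an algebraically closed field with char(K) ≠ 2, g a positive integer, α_1, …, α_{2g+1} pairwise distinct elements of K, and f(x) = ∏_{i=1}^{2g+1}(x − α_i) ∈ K[x]. Let β be one of the α_i, let U(x) ∈ K[x] be monic of degree g with U(β) ≠ 0, and let V(x) ∈ K[x] with deg V < g and U(x) ∣ f(x) − V(x)^2. Set V_1(x) = V(x) − (V(β)/U(β))·U(x) and Ũ(x) = (f(x) − V_1(x)^2)/((x − β)·U(x)). Then the polynomial V^{[β]}(x) = −V(x) + (V(β)/U(β))·(U(x) − Ũ(x)) has degree < g and is congruent to −V_1(x) modulo Ũ(x); that is, V^{[β]}(x) is the remainder of −V_1(x) upon division by Ũ(x). -/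

import Mathlib

open Polynomial in
/-- In the setting of Statement 6, with
`V₁ = V - (V(β)/U(β))·U`, `Ut = (f - V₁²) /ₘ ((X - C β)·U)` and
`V^[β] = -V + (V(β)/U(β))·(U - Ut)`, the polynomial `V^[β]` has degree `< g`
and is congruent to `-V₁` modulo `Ut`; that is, `V^[β]` is the remainder of
`-V₁` upon division by `Ut`. -/
theorem Vbeta_is_remainder
    {K : Type*} [Field K] [IsAlgClosed K] (hK : ringChar K ≠ 2)
    (g : ℕ) (hg : 0 < g) (α : Fin (2 * g + 1) → K) (hα : Function.Injective α)
    (f : K[X]) (hf : f = ∏ i, (X - C (α i)))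
    (i₀ : Fin (2 * g + 1)) (β : K) (hβ : β = α i₀)
    (U : K[X]) (hU : U.Monic) (hUdeg : U.natDegree = g) (hUβ : U.eval β ≠ 0)
    (V : K[X]) (hVdeg : V.degree < (g : WithBot ℕ))
    (hdvd : U ∣ f - V ^ 2)
    (V₁ : K[X]) (hV₁ : V₁ = V - C (V.eval β / U.eval β) * U)
    (Ut : K[X]) (hUt : Ut = (f - V₁ ^ 2) /ₘ ((X - C β) * U))
    (Vβ : K[X]) (hVβ : Vβ = -V + C (V.eval β / U.eval β) * (U - Ut)) :
    Vβ.degree < (g : WithBot ℕ) ∧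
    Ut ∣ (-V₁ - Vβ) ∧
    Vβ = (-V₁) %ₘ Ut := by
  set c : K := V.eval β / U.eval β with hc
  -- f is monic of degree 2g+1
  have hfM : f.Monic := by
    rw [hf]; exact monic_prod_of_monic _ _ fun i _ => monic_X_sub_C _
  have hfdeg : f.natDegree = 2 * g + 1 := by
    rw [hf, natDegree_prod _ _ (fun i _ => X_sub_C_ne_zero (α i))]
    simp [natDegree_X_sub_C]
  -- f(β) = 0
  have hfβ : f.eval β = 0 := by
    rw [hf, eval_prod]
    exact Finset.prod_eq_zero (Finset.mem_univ i₀) (by simp [hβ])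
  -- V₁(β) = 0
  have hV₁β : V₁.eval β = 0 := by
    simp [hV₁, hc, div_mul_cancel₀ _ hUβ]
  -- degree bounds on V₁
  have hUdeg' : U.degree = (g : WithBot ℕ) := by
    rw [(degree_eq_natDegree hU.ne_zero), hUdeg]
  have hV₁deg : V₁.degree ≤ (g : WithBot ℕ) := by
    rw [hV₁]
    refine (degree_sub_le _ _).trans (max_le (le_of_lt hVdeg) ?_)
    refine (degree_mul_le _ _).trans ?_
    rw [hUdeg']
    calc (C c).degree + (g : WithBot ℕ) ≤ 0 + (g : WithBot ℕ) :=
          add_le_add_left degree_C_le _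
      _ = (g : WithBot ℕ) := zero_add _
  -- (X - C β) * U divides f - V₁²
  have hUdvd : U ∣ f - V₁ ^ 2 := by
    have : f - V₁ ^ 2 = (f - V ^ 2) + C c * U * (V + V₁) := by
      rw [hV₁]; ring
    rw [this]
    exact dvd_add hdvd ⟨C c * (V + V₁), by ring⟩
  have hXdvd : (X - C β) ∣ f - V₁ ^ 2 := by
    rw [dvd_iff_isRoot]
    simp [IsRoot, hfβ, hV₁β]
  have hcop : IsCoprime (X - C β) U := by
    rw [(irreducible_X_sub_C β).coprime_iff_not_dvd, dvd_iff_isRoot]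
    exact fun h => hUβ h
  have hmul_dvd : (X - C β) * U ∣ f - V₁ ^ 2 := hcop.mul_dvd hXdvd hUdvd
  obtain ⟨Q, hQ⟩ := hmul_dvd
  have hXUmonic : ((X - C β) * U).Monic := (monic_X_sub_C β).mul hU
  have hUtQ : Ut = Q := by
    rw [hUt, hQ, mul_divByMonic_cancel_left _ hXUmonic]
  -- f - V₁² is monic of degree 2g+1
  have hDmonic : (f - V₁ ^ 2).Monic := by
    have h2 : (-(V₁ ^ 2)).degree < f.degree := by
      rw [(degree_eq_natDegree hfM.ne_zero), hfdeg, degree_neg]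
      calc (V₁ ^ 2).degree ≤ 2 * (g : WithBot ℕ) := by
            rw [pow_two]
            exact (degree_mul_le _ _).trans (by rw [two_mul]; exact add_le_add hV₁deg hV₁deg)
        _ < ((2 * g + 1 : ℕ) : WithBot ℕ) := by
            rw [show (2 * (g : WithBot ℕ)) = ((2 * g : ℕ) : WithBot ℕ) by push_cast; ring]
            exact_mod_cast Nat.lt_succ_self _
    have := hfM.add_of_left h2
    rwa [← sub_eq_add_neg] at this
  have hUtMonic : Ut.Monic := by
    rw [hUtQ]
    exact hXUmonic.of_mul_monic_left (by rwa [← hQ])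
  have hDdeg : (f - V₁ ^ 2).degree = f.degree := by
    apply degree_sub_eq_left_of_degree_lt
    rw [(degree_eq_natDegree hfM.ne_zero), hfdeg]
    calc (V₁ ^ 2).degree ≤ 2 * (g : WithBot ℕ) := by
          rw [pow_two]
          exact (degree_mul_le _ _).trans (by rw [two_mul]; exact add_le_add hV₁deg hV₁deg)
      _ < ((2 * g + 1 : ℕ) : WithBot ℕ) := by
          rw [show (2 * (g : WithBot ℕ)) = ((2 * g : ℕ) : WithBot ℕ) by push_cast; ring]
          exact_mod_cast Nat.lt_succ_self _
  have hDnat : (f - V₁ ^ 2).natDegree = 2 * g + 1 := by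
    rw [← hfdeg]; exact natDegree_eq_of_degree_eq hDdeg
  have hUtdeg : Ut.natDegree = g := by
    have := hXUmonic.natDegree_mul hUtMonic
    rw [hUtQ, ← hQ, hDnat] at this
    have hXU : ((X - C β) * U).natDegree = 1 + g := by
      rw [(monic_X_sub_C β).natDegree_mul hU, natDegree_X_sub_C, hUdeg]
    rw [hUtQ]
    omega
  have hUtdeg' : Ut.degree = (g : WithBot ℕ) := by
    rw [(degree_eq_natDegree hUtMonic.ne_zero), hUtdeg]
  -- degree of Vβ
  have hVβdeg : Vβ.degree < (g : WithBot ℕ) := by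
    rw [hVβ]
    apply lt_of_le_of_lt (degree_add_le _ _)
    rw [max_lt_iff]
    constructor
    · rwa [degree_neg]
    · apply lt_of_le_of_lt (degree_mul_le _ _)
      have hsub : (U - Ut).degree < (g : WithBot ℕ) := by
        rcases eq_or_ne U Ut with h | h
        · simp [h, hg, Nat.pos_iff_ne_zero]
        · have := degree_sub_lt (p := U) (q := Ut) (by rw [hUdeg', hUtdeg']) hU.ne_zero
            (by rw [hU.leadingCoeff, hUtMonic.leadingCoeff])
          rwa [hUdeg'] at this
      calc (C c).degree + (U - Ut).degree ≤ 0 + (U - Ut).degree := by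
            exact add_le_add_left degree_C_le _
        _ = (U - Ut).degree := by rw [zero_add]
        _ < (g : WithBot ℕ) := hsub
  -- the key identity: -V₁ = Vβ + Ut * C c
  have hkey : Vβ + Ut * C c = -V₁ := by
    rw [hVβ, hV₁]; ring
  refine ⟨hVβdeg, ⟨C c, by rw [← hkey]; ring⟩, ?_⟩
  have := (div_modByMonic_unique (C c) Vβ hUtMonic
    ⟨hkey, by rwa [hUtdeg']⟩).2
  exact this.symm
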